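/- arXiv:2510.26062 — 4 statements merged into one kernel-verified Lean document; each statement's English description precedes it below -/
import Mathlib

section
/- Intermediate integral inequality in the mean curvature comparison for the ∞-Bakry-Émery Ricci tensor (Lemma 2.2): let n > 1 be a real number, T ∈ (0,∞], H ∈ ℝ, and let m : [0,T) → ℝ be differentiable and φ : [0,T) → ℝ be twice differentiable, with m(0) = H and m'(r) ≤ − m(r)^2/(n−1) + φ''(r) for all r ∈ [0,T). Set H_f = H − φ'(0), h(r) = (n−1) + H_f r, and m₀(r) = (n−1)H_f / h(r). Then for every r ∈ [0,T) such that h > 0 on [0,r], one has h(r)^2 · ( m(r) − φ'(r) − m₀(r) ) ≤ − ∫₀^r (h^2)'(t) · φ'(t) dt. -/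
open Set ENNReal intervalIntegral

/-- Intermediate integral inequality in the mean curvature comparison for the
`∞`-Bakry-Émery Ricci tensor: with `H_f = H - φ' 0`, `h r = (n-1) + H_f * r` and
`m₀ r = (n-1) * H_f / h r`, if `m 0 = H` and `m' r ≤ - (m r)^2/(n-1) + φ'' r` on `[0,T)`,
then `h(r)^2 * (m r - φ' r - m₀ r) ≤ - ∫ t in 0..r, (h^2)'(t) * φ'(t) dt`
whenever `h > 0` on `[0,r]`. -/
theorem weighted_mean_curvature_integral_inequality
    (n H : ℝ) (hn : 1 < n) (T : ℝ≥0∞) (hT : 0 < T)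
    (m m' φ φ' φ'' : ℝ → ℝ)
    (hm : ∀ r : ℝ, 0 ≤ r → ENNReal.ofReal r < T →
      HasDerivWithinAt m (m' r) (Set.Ici 0) r)
    (hφ : ∀ r : ℝ, 0 ≤ r → ENNReal.ofReal r < T →
      HasDerivWithinAt φ (φ' r) (Set.Ici 0) r)
    (hφ' : ∀ r : ℝ, 0 ≤ r → ENNReal.ofReal r < T →
      HasDerivWithinAt φ' (φ'' r) (Set.Ici 0) r)
    (h0 : m 0 = H)
    (hriccati : ∀ r : ℝ, 0 ≤ r → ENNReal.ofReal r < T →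
      m' r ≤ - (m r) ^ 2 / (n - 1) + φ'' r)
    (r : ℝ) (hr0 : 0 ≤ r) (hrT : ENNReal.ofReal r < T)
    (hpos : ∀ t ∈ Set.Icc (0 : ℝ) r, 0 < (n - 1) + (H - φ' 0) * t) :
    ((n - 1) + (H - φ' 0) * r) ^ 2 *
        (m r - φ' r - (n - 1) * (H - φ' 0) / ((n - 1) + (H - φ' 0) * r)) ≤
      - ∫ t in (0 : ℝ)..r, (2 * ((n - 1) + (H - φ' 0) * t) * (H - φ' 0)) * φ' t := by
  have hn1 : (0:ℝ) < n - 1 := by linarith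
  set Hf : ℝ := H - φ' 0 with hHf
  set h : ℝ → ℝ := fun t => (n - 1) + Hf * t with hhdef
  set g : ℝ → ℝ := fun t => (2 * h t * Hf) * φ' t with hgdef
  set F : ℝ → ℝ := fun t =>
    (h t) ^ 2 * (m t - φ' t) - (n - 1) * Hf * h t + ∫ s in (0:ℝ)..t, g s with hFdef
  have hmemT : ∀ t ∈ Icc (0:ℝ) r, ENNReal.ofReal t < T := fun t ht =>
    lt_of_le_of_lt (ENNReal.ofReal_le_ofReal ht.2) hrT
  have hhc : Continuous h := by continuity
  have hmc : ContinuousOn m (Icc 0 r) := fun t ht =>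
    ((hm t ht.1 (hmemT t ht)).continuousWithinAt).mono (fun x hx => hx.1)
  have hφ'c : ContinuousOn φ' (Icc 0 r) := fun t ht =>
    ((hφ' t ht.1 (hmemT t ht)).continuousWithinAt).mono (fun x hx => hx.1)
  have hgc : ContinuousOn g (Icc 0 r) :=
    ((continuousOn_const.mul hhc.continuousOn).mul continuousOn_const).mul hφ'c
  have hgint : IntervalIntegrable g MeasureTheory.volume 0 r := by
    exact ContinuousOn.intervalIntegrable (by rwa [uIcc_of_le hr0])
  -- continuity of F on [0, r]
  have hIc : ContinuousOn (fun t => ∫ s in (0:ℝ)..t, g s) (Icc 0 r) := by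
    have h1 := intervalIntegral.continuousOn_primitive_interval
      (f := g) (μ := MeasureTheory.volume) (a := 0) (b := r)
      (by rw [uIcc_of_le hr0]; exact hgc.integrableOn_Icc)
    rwa [uIcc_of_le hr0] at h1
  have hFc : ContinuousOn F (Icc 0 r) := by
    apply ContinuousOn.add
    · exact ((hhc.pow 2).continuousOn.mul (hmc.sub hφ'c)).sub
        (continuousOn_const.mul hhc.continuousOn)
    · exact hIc
  -- derivative of F on the interior
  have hFd : ∀ x ∈ Ioo (0:ℝ) r, HasDerivAt F
      ((2 * h x ^ 1 * Hf) * (m x - φ' x) + h x ^ 2 * (m' x - φ'' x)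
        - (n - 1) * Hf * Hf + g x) x := by
    intro x hx
    have hx0 : (0:ℝ) < x := hx.1
    have hxI : x ∈ Icc (0:ℝ) r := ⟨hx0.le, hx.2.le⟩
    have hmem : Ici (0:ℝ) ∈ nhds x := Ici_mem_nhds hx0
    have hmx : HasDerivAt m (m' x) x := (hm x hx0.le (hmemT x hxI)).hasDerivAt hmem
    have hφx : HasDerivAt φ' (φ'' x) x := (hφ' x hx0.le (hmemT x hxI)).hasDerivAt hmem
    have hhx : HasDerivAt h Hf x := by
      exact (((hasDerivAt_id x).const_mul Hf).const_add ((n:ℝ) - 1)).congr_deriv (mul_one Hf)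
    have hgoo : ContinuousOn g (Ioo 0 r) := hgc.mono Ioo_subset_Icc_self
    have hInt : HasDerivAt (fun t => ∫ s in (0:ℝ)..t, g s) (g x) x := by
      refine intervalIntegral.integral_hasDerivAt_right
        (hgint.mono_set ?_)
        (hgoo.stronglyMeasurableAtFilter isOpen_Ioo x hx)
        (hgoo.continuousAt (Ioo_mem_nhds hx0 hx.2))
      rw [uIcc_of_le hx0.le, uIcc_of_le hr0]
      exact Icc_subset_Icc le_rfl hx.2.le
    exact (((hhx.pow 2).mul (hmx.sub hφx)).sub (hhx.const_mul ((n-1)*Hf))).add hInt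
  -- the derivative is nonpositive
  have hFd0 : ∀ x ∈ Ioo (0:ℝ) r, deriv F x ≤ 0 := by
    intro x hx
    have hxI : x ∈ Icc (0:ℝ) r := ⟨hx.1.le, hx.2.le⟩
    rw [(hFd x hx).deriv]
    have key : (m' x - φ'' x) * (n - 1) ≤ - m x ^ 2 := by
      have h1 := hriccati x hx.1.le (hmemT x hxI)
      have h2 : m' x - φ'' x ≤ - m x ^ 2 / (n - 1) := by linarith
      calc (m' x - φ'' x) * (n - 1) ≤ (- m x ^ 2 / (n - 1)) * (n - 1) := by
            exact mul_le_mul_of_nonneg_right h2 hn1.le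
        _ = - m x ^ 2 := by field_simp
    have hsq : (0:ℝ) ≤ (h x * m x - (n - 1) * Hf) ^ 2 := sq_nonneg _
    have hxsq : (0:ℝ) ≤ h x ^ 2 := sq_nonneg _
    have key2 : h x ^ 2 * ((m' x - φ'' x) * (n - 1)) ≤ h x ^ 2 * (- m x ^ 2) :=
      mul_le_mul_of_nonneg_left key hxsq
    show (2 * h x ^ 1 * Hf) * (m x - φ' x) + h x ^ 2 * (m' x - φ'' x)
        - (n - 1) * Hf * Hf + g x ≤ 0
    simp only [hgdef, pow_one]
    nlinarith [hsq, key2, hn1, sq_nonneg (h x * m x)]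
  have hant : AntitoneOn F (Icc 0 r) := by
    apply antitoneOn_of_deriv_nonpos (convex_Icc 0 r) hFc
    · intro x hx
      rw [interior_Icc] at hx
      exact (hFd x hx).differentiableAt.differentiableWithinAt
    · intro x hx
      rw [interior_Icc] at hx
      exact hFd0 x hx
  have hF0 : F 0 = 0 := by
    simp only [hFdef, intervalIntegral.integral_same, hhdef, mul_zero, add_zero, h0]
    ring
  have hFr : F r ≤ 0 := by
    have := hant (left_mem_Icc.mpr hr0) (right_mem_Icc.mpr hr0) hr0
    rwa [hF0] at this
  have hhr : (0:ℝ) < h r := hpos r (right_mem_Icc.mpr hr0)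
  have hne : h r ≠ 0 := ne_of_gt hhr
  have hid : (h r) ^ 2 * ((n - 1) * Hf / h r) = (n - 1) * Hf * h r := by
    field_simp
  have hexp : (h r) ^ 2 * (m r - φ' r - (n - 1) * Hf / h r)
      = (h r) ^ 2 * (m r - φ' r) - (h r) ^ 2 * ((n - 1) * Hf / h r) := by ring
  show (h r) ^ 2 * (m r - φ' r - (n - 1) * Hf / h r) ≤ - ∫ s in (0:ℝ)..r, g s
  rw [hexp, hid]
  have : (h r) ^ 2 * (m r - φ' r) - (n - 1) * Hf * h r + (∫ s in (0:ℝ)..r, g s) ≤ 0 := hFr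
  linarith
end

section
/- Weighted Riccati comparison (analytic core of Lemma 2.2, mean curvature comparison for nonnegative ∞-Bakry-Émery Ricci curvature): let n > 1 be a real number, T ∈ (0,∞], H ∈ ℝ, and let m : [0,T) → ℝ be differentiable and φ : [0,T) → ℝ be twice differentiable, with m(0) = H and m'(r) ≤ − m(r)^2/(n−1) + φ''(r) for all r ∈ [0,T). Set H_f = H − φ'(0). If H_f ≥ 0 and φ'(r) ≥ 0 for all r ∈ [0,T), then for every r ∈ [0,T) one has m(r) − φ'(r) ≤ (n−1) H_f / ((n−1) + H_f r). -/
open Set ENNReal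

/-- Weighted Riccati comparison: with `H_f = H - φ' 0`, if `m 0 = H`,
`m' r ≤ - (m r)^2/(n-1) + φ'' r` on `[0,T)`, `H_f ≥ 0` and `φ' ≥ 0` on `[0,T)`,
then `m r - φ' r ≤ (n-1) * H_f / ((n-1) + H_f * r)` for every `r ∈ [0,T)`. -/
theorem weighted_riccati_comparison
    (n H : ℝ) (hn : 1 < n) (T : ℝ≥0∞) (hT : 0 < T)
    (m m' φ φ' φ'' : ℝ → ℝ)
    (hm : ∀ r : ℝ, 0 ≤ r → ENNReal.ofReal r < T →
      HasDerivWithinAt m (m' r) (Set.Ici 0) r)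
    (hφ : ∀ r : ℝ, 0 ≤ r → ENNReal.ofReal r < T →
      HasDerivWithinAt φ (φ' r) (Set.Ici 0) r)
    (hφ' : ∀ r : ℝ, 0 ≤ r → ENNReal.ofReal r < T →
      HasDerivWithinAt φ' (φ'' r) (Set.Ici 0) r)
    (h0 : m 0 = H)
    (hriccati : ∀ r : ℝ, 0 ≤ r → ENNReal.ofReal r < T →
      m' r ≤ - (m r) ^ 2 / (n - 1) + φ'' r)
    (hHf : 0 ≤ H - φ' 0)
    (hφ'nonneg : ∀ r : ℝ, 0 ≤ r → ENNReal.ofReal r < T → 0 ≤ φ' r)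
    (r : ℝ) (hr0 : 0 ≤ r) (hrT : ENNReal.ofReal r < T) :
    m r - φ' r ≤ (n - 1) * (H - φ' 0) / ((n - 1) + (H - φ' 0) * r) := by
  set c : ℝ := n - 1 with hc
  have hcpos : 0 < c := by simp [hc]; linarith
  set a : ℝ := H - φ' 0 with ha
  -- denominator positivity
  have hden : ∀ x : ℝ, 0 ≤ x → 0 < c + a * x := fun x hx =>
    lt_of_lt_of_le hcpos (by nlinarith)
  -- the model function
  set M : ℝ → ℝ := fun x => c * a / (c + a * x) with hM
  have hMnonneg : ∀ x : ℝ, 0 ≤ x → 0 ≤ M x := fun x hx =>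
    div_nonneg (by positivity) (hden x hx).le
  have hMderiv : ∀ x : ℝ, 0 ≤ x →
      HasDerivAt M (- (M x) ^ 2 / c) x := by
    intro x hx
    have h1 : HasDerivAt (fun y : ℝ => c + a * y) a x := by
      simpa using ((hasDerivAt_id x).const_mul a).const_add c
    have h2 : HasDerivAt M ((0 * (c + a * x) - c * a * a) / (c + a * x) ^ 2) x :=
      (hasDerivAt_const x (c * a)).div h1 (hden x hx).ne'
    convert h2 using 1
    have hne := (hden x hx).ne'
    simp only [hM]
    field_simp
    ring
  -- conclude via an ε-perturbation
  have key : ∀ ε : ℝ, 0 < ε → m r - φ' r ≤ M r + ε := by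
    intro ε hε
    set B : ℝ → ℝ := fun x => M x + ε with hB
    have hxT : ∀ x ∈ Icc (0:ℝ) r, ENNReal.ofReal x < T := fun x hx =>
      lt_of_le_of_lt (ENNReal.ofReal_le_ofReal hx.2) hrT
    have hcont : ContinuousOn (fun x => m x - φ' x) (Icc 0 r) := by
      intro x hx
      exact (((hm x hx.1 (hxT x hx)).sub (hφ' x hx.1 (hxT x hx))).continuousWithinAt).mono
        (fun y hy => hy.1)
    have hBcont : ContinuousOn B (Icc 0 r) := by
      intro x hx
      exact ((hMderiv x hx.1).continuousAt.continuousWithinAt.add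
        continuousWithinAt_const)
    have hf' : ∀ x ∈ Ico (0:ℝ) r, HasDerivWithinAt (fun x => m x - φ' x)
        (m' x - φ'' x) (Ici x) x := by
      intro x hx
      have hxT' : ENNReal.ofReal x < T := hxT x ⟨hx.1, hx.2.le⟩
      exact ((hm x hx.1 hxT').sub (hφ' x hx.1 hxT')).mono (fun y hy => le_trans hx.1 hy)
    have hB' : ∀ x ∈ Ico (0:ℝ) r, HasDerivWithinAt B (- (M x) ^ 2 / c) (Ici x) x := by
      intro x hx
      exact (((hMderiv x hx.1).add_const ε).hasDerivWithinAt)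
    have hinit : m 0 - φ' 0 ≤ B 0 := by
      have : M 0 = a := by simp only [hM, mul_zero, add_zero]; exact mul_div_cancel_left₀ a hcpos.ne'
      simp only [hB, this, h0]
      linarith
    have bound : ∀ x ∈ Ico (0:ℝ) r, m x - φ' x = B x →
        m' x - φ'' x < - (M x) ^ 2 / c := by
      intro x hx heq
      have hxT' : ENNReal.ofReal x < T := hxT x ⟨hx.1, hx.2.le⟩
      have hφx : 0 ≤ φ' x := hφ'nonneg x hx.1 hxT'
      have hMx : 0 ≤ M x := hMnonneg x hx.1
      have hmx : M x + ε ≤ m x := by simp only [hB] at heq; linarith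
      have hsq : (M x) ^ 2 < (m x) ^ 2 := by nlinarith
      have h1 : m' x - φ'' x ≤ - (m x) ^ 2 / c := by
        have := hriccati x hx.1 hxT'
        linarith
      calc m' x - φ'' x ≤ - (m x) ^ 2 / c := h1
        _ < - (M x) ^ 2 / c := (div_lt_div_iff_of_pos_right hcpos).2 (by linarith)
    have := image_le_of_deriv_right_lt_deriv_boundary'
      hcont hf' hinit hBcont hB' bound (right_mem_Icc.2 hr0)
    simpa [hB] using this
  have : m r - φ' r ≤ M r := le_of_forall_pos_le_add (by
    intro ε hε; exact key ε hε)
  simpa [hM, hc, ha] using this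
end

section
/- Tube-volume limsup bound (measure-theoretic core of the Willmore-type inequalities (5) and (8)): let (Σ, μ) be a measure space with μ a finite measure, let k > 1 be a real number, let c : Σ → [0,∞) be μ-integrable, let H : Σ → ℝ be measurable and bounded, and let V : Σ × [0,∞) → [0,∞) be measurable such that V(x,t) ≤ c(x) · (1 + max(H(x),0) · t/(k−1))^{k−1} for all x ∈ Σ and t ≥ 0. Then limsup_{R→∞} (k / R^k) · ∫_Σ ∫₀^R V(x,t) dt dμ(x) ≤ ∫_Σ c(x) · (max(H(x),0)/(k−1))^{k−1} dμ(x). -/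
open Filter MeasureTheory intervalIntegral

private lemma rpow_cont {p : ℝ} (hp : 0 < p) : Continuous fun u : ℝ => u ^ p := by
  rw [continuous_iff_continuousAt]
  intro x
  exact Real.continuousAt_rpow_const x p (Or.inr hp.le)

private lemma W_integrable {k b : ℝ} (hk : 1 < k) (R : ℝ) :
    IntervalIntegrable (fun t => (1 + b * t) ^ (k - 1)) MeasureTheory.volume 0 R :=
  ((rpow_cont (by linarith : (0:ℝ) < k - 1)).comp
    (continuous_const.add (continuous_const.mul continuous_id))).intervalIntegrable 0 R

private lemma W_nonneg {k b : ℝ} (hb : 0 ≤ b) {R : ℝ} (hR : 0 ≤ R) :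
    0 ≤ ∫ t in (0:ℝ)..R, (1 + b * t) ^ (k - 1) :=
  intervalIntegral.integral_nonneg hR fun t ht =>
    Real.rpow_nonneg (by nlinarith [ht.1]) _

private lemma W_eq {k b : ℝ} (hk : 1 < k) (hb : 0 < b) {R : ℝ} (hR : 0 ≤ R) :
    (∫ t in (0:ℝ)..R, (1 + b * t) ^ (k - 1)) = ((1 + b * R) ^ k - 1) / (b * k) := by
  have hk0 : (0:ℝ) < k := by linarith
  have key : ∀ t ∈ Set.uIcc (0:ℝ) R,
      HasDerivAt (fun t => (1 + b * t) ^ k / (b * k)) ((1 + b * t) ^ (k - 1)) t := by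
    intro t ht
    rw [Set.uIcc_of_le hR] at ht
    have h1 : (0:ℝ) < 1 + b * t := by nlinarith [ht.1]
    have hd : HasDerivAt (fun t : ℝ => 1 + b * t) b t := by
      simpa using ((hasDerivAt_id t).const_mul b).const_add 1
    have h2 := (hd.rpow_const (p := k) (Or.inl h1.ne')).div_const (b * k)
    rw [mul_div_right_comm, div_self (mul_pos hb hk0).ne', one_mul] at h2
    exact h2
  rw [intervalIntegral.integral_eq_sub_of_hasDerivAt key (W_integrable hk R)]
  rw [mul_zero, add_zero, Real.one_rpow]
  ring

private lemma W_le {k b : ℝ} (hk : 1 < k) (hb : 0 ≤ b) {R : ℝ} (hR : 0 ≤ R) :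
    (∫ t in (0:ℝ)..R, (1 + b * t) ^ (k - 1)) ≤ R * (1 + b * R) ^ (k - 1) := by
  have h : (∫ t in (0:ℝ)..R, (1 + b * t) ^ (k - 1)) ≤
      ∫ _t in (0:ℝ)..R, (1 + b * R) ^ (k - 1) :=
    intervalIntegral.integral_mono_on hR (W_integrable hk R) intervalIntegrable_const
      (fun t ht => Real.rpow_le_rpow (by nlinarith [ht.1])
        (by nlinarith [ht.2, ht.1]) (by linarith))
  simpa using h

/-- Tube-volume limsup bound: if `μ` is a finite measure on `Σ`, `k > 1`,
`c : Σ → [0,∞)` is integrable, `H` is measurable and bounded, and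
`V : Σ × [0,∞) → [0,∞)` is measurable with
`V x t ≤ c x * (1 + max (H x) 0 * t/(k-1))^(k-1)` for all `x` and `t ≥ 0`, then
`limsup_{R→∞} (k / R^k) * ∫_Σ ∫₀^R V x t dt dμ(x)
  ≤ ∫_Σ c x * (max (H x) 0/(k-1))^(k-1) dμ(x)`. -/
theorem tube_volume_limsup_bound
    {α : Type*} [MeasurableSpace α] (μ : Measure α) [IsFiniteMeasure μ]
    (k : ℝ) (hk : 1 < k)
    (c : α → ℝ) (hc0 : ∀ x, 0 ≤ c x) (hc : Integrable c μ)
    (H : α → ℝ) (hHmeas : Measurable H) (hHbdd : ∃ C : ℝ, ∀ x, |H x| ≤ C)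
    (V : α → ℝ → ℝ) (hVmeas : Measurable (Function.uncurry V))
    (hV0 : ∀ x, ∀ t : ℝ, 0 ≤ t → 0 ≤ V x t)
    (hVle : ∀ x, ∀ t : ℝ, 0 ≤ t →
      V x t ≤ c x * (1 + max (H x) 0 * t / (k - 1)) ^ (k - 1)) :
    Filter.limsup
        (fun R : ℝ => (k / R ^ k) * ∫ x, (∫ t in (0 : ℝ)..R, V x t) ∂μ)
        Filter.atTop ≤
      ∫ x, c x * (max (H x) 0 / (k - 1)) ^ (k - 1) ∂μ := by
  obtain ⟨C, hC⟩ := hHbdd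
  have hk1 : (0:ℝ) < k - 1 := by linarith
  have hk0 : (0:ℝ) < k := by linarith
  set B : α → ℝ := fun x => max (H x) 0 / (k - 1) with hBdef
  have hB0 : ∀ x, 0 ≤ B x := fun x => div_nonneg (le_max_right _ _) hk1.le
  set B₀ : ℝ := max C 0 / (k - 1) with hB₀def
  have hB₀0 : 0 ≤ B₀ := div_nonneg (le_max_right _ _) hk1.le
  have hBle : ∀ x, B x ≤ B₀ := by
    intro x
    have h1 : max (H x) 0 ≤ max C 0 := max_le_max ((le_abs_self _).trans (hC x)) le_rfl
    show (H x ⊔ 0) / (k - 1) ≤ (C ⊔ 0) / (k - 1)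
    gcongr
  set Φ : ℝ → ℝ → ℝ :=
    fun b R => (k / R ^ k) * (if b = 0 then R else ((1 + b * R) ^ k - 1) / (b * k)) with hΦdef
  have hΦW : ∀ b : ℝ, 0 ≤ b → ∀ R : ℝ, 0 ≤ R →
      (k / R ^ k) * (∫ t in (0:ℝ)..R, (1 + b * t) ^ (k - 1)) = Φ b R := by
    intro b hb R hR
    rcases eq_or_lt_of_le hb with h | h
    · simp [hΦdef, ← h, Real.one_rpow]
    · rw [W_eq hk h hR, hΦdef]
      simp [h.ne']
  have hΦ0 : ∀ b : ℝ, 0 ≤ b → ∀ R : ℝ, 0 ≤ R → 0 ≤ Φ b R := by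
    intro b hb R hR
    rw [← hΦW b hb R hR]
    exact mul_nonneg (div_nonneg hk0.le (Real.rpow_nonneg hR k)) (W_nonneg hb hR)
  have hΦle : ∀ b : ℝ, 0 ≤ b → b ≤ B₀ → ∀ R : ℝ, 1 ≤ R →
      Φ b R ≤ k * (1 + B₀) ^ (k - 1) := by
    intro b hb hbB R hR
    have hR0 : (0:ℝ) < R := by linarith
    rw [← hΦW b hb R hR0.le]
    have h1 : (k / R ^ k) * (∫ t in (0:ℝ)..R, (1 + b * t) ^ (k - 1)) ≤
        (k / R ^ k) * (R * (1 + b * R) ^ (k - 1)) :=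
      mul_le_mul_of_nonneg_left (W_le hk hb hR0.le)
        (div_nonneg hk0.le (Real.rpow_nonneg hR0.le k))
    refine h1.trans ?_
    have hsplit : (1 + b * R) = R * (R⁻¹ + b) := by field_simp
    have hRk : R ^ k = R ^ (k - 1) * R := by
      have h2 := Real.rpow_add hR0 (k - 1) 1
      have h3 : k - 1 + 1 = k := by ring
      rw [h3, Real.rpow_one] at h2
      exact h2
    have hmul : (1 + b * R) ^ (k - 1) = R ^ (k - 1) * (R⁻¹ + b) ^ (k - 1) := by
      rw [hsplit, Real.mul_rpow hR0.le (by positivity)]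
    have hRk1 : (0:ℝ) < R ^ (k - 1) := Real.rpow_pos_of_pos hR0 _
    have heq : (k / R ^ k) * (R * (1 + b * R) ^ (k - 1)) = k * (R⁻¹ + b) ^ (k - 1) := by
      rw [hmul, hRk]
      field_simp
    rw [heq]
    have : (R⁻¹ + b) ^ (k - 1) ≤ (1 + B₀) ^ (k - 1) := by
      apply Real.rpow_le_rpow (by positivity) _ hk1.le
      have : R⁻¹ ≤ 1 := inv_le_one_of_one_le₀ hR
      linarith
    nlinarith [hk0]
  have hΦtend : ∀ b : ℝ, 0 ≤ b → Tendsto (fun R => Φ b R) atTop (nhds (b ^ (k - 1))) := by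
    intro b hb
    rcases eq_or_lt_of_le hb with h | h
    · rw [← h, Real.zero_rpow hk1.ne']
      have heq : (fun R : ℝ => Φ 0 R) =ᶠ[atTop] fun R => k * (R ^ (k - 1))⁻¹ := by
        filter_upwards [eventually_ge_atTop (1:ℝ)] with R hR
        have hR0 : (0:ℝ) < R := by linarith
        have hRk : R ^ k = R ^ (k - 1) * R := by
          have h2 := Real.rpow_add hR0 (k - 1) 1
          have h3 : k - 1 + 1 = k := by ring
          rw [h3, Real.rpow_one] at h2
          exact h2
        have hRk1 : (0:ℝ) < R ^ (k - 1) := Real.rpow_pos_of_pos hR0 _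
        simp only [hΦdef, if_pos rfl, ↓reduceIte]
        rw [hRk]
        field_simp
      refine Tendsto.congr' heq.symm ?_
      have h5 : Tendsto (fun R : ℝ => (R ^ (k - 1))⁻¹) atTop (nhds 0) :=
        (tendsto_rpow_atTop hk1).inv_tendsto_atTop
      simpa using h5.const_mul k
    · have hbne : b ≠ 0 := h.ne'
      have heq : (fun R : ℝ => Φ b R) =ᶠ[atTop]
          fun R => ((R⁻¹ + b) ^ k - (R ^ k)⁻¹) / b := by
        filter_upwards [eventually_ge_atTop (1:ℝ)] with R hR
        have hR0 : (0:ℝ) < R := by linarith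
        have hRk : (0:ℝ) < R ^ k := Real.rpow_pos_of_pos hR0 _
        have hmul : (1 + b * R) ^ k = R ^ k * (R⁻¹ + b) ^ k := by
          rw [show (1 + b * R) = R * (R⁻¹ + b) by field_simp,
            Real.mul_rpow hR0.le (by positivity)]
        simp only [hΦdef, if_neg hbne]
        rw [hmul]
        field_simp
      refine Tendsto.congr' heq.symm ?_
      have h1 : Tendsto (fun R : ℝ => R⁻¹ + b) atTop (nhds (0 + b)) :=
        tendsto_inv_atTop_zero.add tendsto_const_nhds
      rw [zero_add] at h1
      have h2 : Tendsto (fun R : ℝ => (R⁻¹ + b) ^ k) atTop (nhds (b ^ k)) :=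
        (Real.continuousAt_rpow_const b k (Or.inl hbne)).tendsto.comp h1
      have h3 : Tendsto (fun R : ℝ => (R ^ k)⁻¹) atTop (nhds 0) :=
        (tendsto_rpow_atTop hk0).inv_tendsto_atTop
      have h4 := (h2.sub h3).div_const b
      rw [sub_zero] at h4
      have h5 : b ^ (k - 1) = b ^ k / b := by
        rw [Real.rpow_sub h, Real.rpow_one]
      rw [h5]
      exact h4
  have hkey : ∀ x : α, ∀ R : ℝ, 1 ≤ R →
      (k / R ^ k) * (∫ t in (0:ℝ)..R, V x t) ≤ c x * Φ (B x) R := by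
    intro x R hR
    have hR0 : (0:ℝ) < R := by linarith
    have hVm : Measurable (V x) := hVmeas.comp measurable_prodMk_left
    have hWint := W_integrable (k := k) (b := B x) hk R
    have hmax0 : 0 ≤ max (H x) 0 := le_max_right _ _
    have hBt : ∀ t : ℝ, max (H x) 0 * t / (k - 1) = B x * t := by
      intro t
      simp only [hBdef]
      ring
    have hVint : IntervalIntegrable (V x) MeasureTheory.volume 0 R := by
      rw [intervalIntegrable_iff_integrableOn_Ioc_of_le hR0.le]
      refine Integrable.mono' (g := fun _ => c x * (1 + B x * R) ^ (k - 1))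
        (integrableOn_const measure_Ioc_lt_top.ne)
        hVm.aestronglyMeasurable.restrict ?_
      filter_upwards [ae_restrict_mem measurableSet_Ioc] with t ht
      rw [Real.norm_eq_abs, abs_of_nonneg (hV0 x t ht.1.le)]
      refine (hVle x t ht.1.le).trans ?_
      have harg : 1 + max (H x) 0 * t / (k - 1) ≤ 1 + B x * R := by
        rw [hBt t]
        have h6 := mul_le_mul_of_nonneg_left ht.2 (hB0 x)
        linarith
      have hlb : 0 ≤ 1 + max (H x) 0 * t / (k - 1) :=
        add_nonneg one_pos.le (div_nonneg (mul_nonneg hmax0 ht.1.le) hk1.le)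
      exact mul_le_mul_of_nonneg_left (Real.rpow_le_rpow hlb harg hk1.le) (hc0 x)
    have hmono : (∫ t in (0:ℝ)..R, V x t) ≤
        ∫ t in (0:ℝ)..R, c x * (1 + B x * t) ^ (k - 1) := by
      apply intervalIntegral.integral_mono_on hR0.le hVint (hWint.const_mul (c x))
      intro t ht
      have h7 := hVle x t ht.1
      rwa [hBt t] at h7
    rw [intervalIntegral.integral_const_mul] at hmono
    calc (k / R ^ k) * ∫ t in (0:ℝ)..R, V x t
        ≤ (k / R ^ k) * (c x * ∫ t in (0:ℝ)..R, (1 + B x * t) ^ (k - 1)) :=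
          mul_le_mul_of_nonneg_left hmono
            (div_nonneg hk0.le (Real.rpow_nonneg hR0.le k))
      _ = c x * ((k / R ^ k) * ∫ t in (0:ℝ)..R, (1 + B x * t) ^ (k - 1)) := by ring
      _ = c x * Φ (B x) R := by rw [hΦW (B x) (hB0 x) R hR0.le]
  have hBmeas : Measurable B := (hHmeas.max measurable_const).div_const (k - 1)
  have hΦmeas : ∀ R : ℝ, Measurable fun b : ℝ => Φ b R := by
    intro R
    simp only [hΦdef]
    apply Measurable.const_mul
    refine Measurable.ite ?_ measurable_const ?_
    · exact measurableSet_eq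
    · exact (((((rpow_cont hk0).comp
          (continuous_const.add (continuous_id.mul continuous_const))).sub
          continuous_const).measurable).div
        ((continuous_id.mul continuous_const).measurable))
  have hgmeas : ∀ R : ℝ, AEStronglyMeasurable (fun x => c x * Φ (B x) R) μ :=
    fun R => hc.aestronglyMeasurable.mul ((hΦmeas R).comp hBmeas).aestronglyMeasurable
  set D : ℝ := k * (1 + B₀) ^ (k - 1) with hDdef
  have hbound : ∀ R : ℝ, 1 ≤ R → ∀ x, ‖c x * Φ (B x) R‖ ≤ c x * D := by
    intro R hR x
    rw [Real.norm_eq_abs,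
      abs_of_nonneg (mul_nonneg (hc0 x) (hΦ0 _ (hB0 x) R (by linarith)))]
    exact mul_le_mul_of_nonneg_left (hΦle _ (hB0 x) (hBle x) R hR) (hc0 x)
  have hgint : ∀ R : ℝ, 1 ≤ R → Integrable (fun x => c x * Φ (B x) R) μ := fun R hR =>
    (hc.mul_const D).mono' (hgmeas R) (Filter.Eventually.of_forall (hbound R hR))
  have htend : Tendsto (fun R : ℝ => ∫ x, c x * Φ (B x) R ∂μ) atTop
      (nhds (∫ x, c x * (B x) ^ (k - 1) ∂μ)) := by
    apply tendsto_integral_filter_of_dominated_convergence (fun x => c x * D)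
    · exact Filter.Eventually.of_forall hgmeas
    · filter_upwards [eventually_ge_atTop (1:ℝ)] with R hR
      exact Filter.Eventually.of_forall (hbound R hR)
    · exact hc.mul_const D
    · exact Filter.Eventually.of_forall fun x => (hΦtend (B x) (hB0 x)).const_mul (c x)
  have hev : ∀ᶠ R in atTop,
      (k / R ^ k) * ∫ x, (∫ t in (0:ℝ)..R, V x t) ∂μ ≤ ∫ x, c x * Φ (B x) R ∂μ := by
    filter_upwards [eventually_ge_atTop (1:ℝ)] with R hR
    have hR0 : (0:ℝ) < R := by linarith
    rw [← MeasureTheory.integral_const_mul]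
    apply integral_mono_of_nonneg
    · exact Filter.Eventually.of_forall fun x =>
        mul_nonneg (div_nonneg hk0.le (Real.rpow_nonneg hR0.le k))
          (intervalIntegral.integral_nonneg hR0.le fun t ht => hV0 x t ht.1)
    · exact hgint R hR
    · exact Filter.Eventually.of_forall fun x => hkey x R hR
  have hF0 : ∀ᶠ R in atTop,
      (0:ℝ) ≤ (k / R ^ k) * ∫ x, (∫ t in (0:ℝ)..R, V x t) ∂μ := by
    filter_upwards [eventually_ge_atTop (1:ℝ)] with R hR
    have hR0 : (0:ℝ) < R := by linarith
    exact mul_nonneg (div_nonneg hk0.le (Real.rpow_nonneg hR0.le k))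
      (integral_nonneg fun x => intervalIntegral.integral_nonneg hR0.le
        fun t ht => hV0 x t ht.1)
  have hcobdd : IsCoboundedUnder (· ≤ ·) atTop
      (fun R : ℝ => (k / R ^ k) * ∫ x, (∫ t in (0:ℝ)..R, V x t) ∂μ) :=
    IsBoundedUnder.isCoboundedUnder_le ⟨0, hF0⟩
  calc Filter.limsup
        (fun R : ℝ => (k / R ^ k) * ∫ x, (∫ t in (0:ℝ)..R, V x t) ∂μ) atTop
      ≤ Filter.limsup (fun R : ℝ => ∫ x, c x * Φ (B x) R ∂μ) atTop :=
        limsup_le_limsup hev hcobdd htend.isBoundedUnder_le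
    _ = ∫ x, c x * (B x) ^ (k - 1) ∂μ := htend.limsup_eq
end

section
/- Rigidity of the volume-element ratio (analytic core of the equality discussion): let k > 1 be a real number, H > 0, and let θ : [0,∞) → (0,∞) be nonincreasing. Define A(t) = θ(t) · (1 + H t/(k−1))^{k−1}. If liminf_{R→∞} (k / R^k) · ∫₀^R A(t) dt ≥ θ(0) · (H/(k−1))^{k−1}, then θ(t) = θ(0) for all t ≥ 0; equivalently, A(t) = θ(0) · (1 + H t/(k−1))^{k−1} for all t ≥ 0. -/
open Filter intervalIntegral Set

/-- Rigidity of the volume-element ratio: let `k > 1`, `H > 0`, and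
`θ : [0,∞) → (0,∞)` nonincreasing, and set `A t = θ t * (1 + H*t/(k-1))^(k-1)`.
If `liminf_{R→∞} (k / R^k) * ∫₀^R A t dt ≥ θ 0 * (H/(k-1))^(k-1)`, then
`θ t = θ 0` for all `t ≥ 0`; equivalently,
`A t = θ 0 * (1 + H*t/(k-1))^(k-1)` for all `t ≥ 0`. -/
theorem volume_element_ratio_rigidity
    (k H : ℝ) (hk : 1 < k) (hH : 0 < H)
    (θ : ℝ → ℝ) (hθpos : ∀ t : ℝ, 0 ≤ t → 0 < θ t)
    (hθanti : AntitoneOn θ (Set.Ici (0 : ℝ)))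
    (hliminf : θ 0 * (H / (k - 1)) ^ (k - 1) ≤
      Filter.liminf
        (fun R : ℝ =>
          (k / R ^ k) * ∫ t in (0 : ℝ)..R, θ t * (1 + H * t / (k - 1)) ^ (k - 1))
        Filter.atTop) :
    (∀ t : ℝ, 0 ≤ t → θ t = θ 0) ∧
      (∀ t : ℝ, 0 ≤ t →
        θ t * (1 + H * t / (k - 1)) ^ (k - 1) =
          θ 0 * (1 + H * t / (k - 1)) ^ (k - 1)) := by
  have hk1 : (0:ℝ) < k - 1 := by linarith
  set c : ℝ := H / (k - 1) with hc
  have hcpos : 0 < c := div_pos hH hk1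
  have hkpos : (0:ℝ) < k := by linarith
  have hrw : ∀ t : ℝ, 1 + H * t / (k - 1) = 1 + c * t := by
    intro t; rw [hc]; ring
  simp only [hrw] at hliminf
  set w : ℝ → ℝ := fun t => (1 + c * t) ^ (k - 1) with hwdef
  have hbase : ∀ t : ℝ, 0 ≤ t → 0 < 1 + c * t := by
    intro t ht
    have := mul_nonneg hcpos.le ht; linarith
  -- continuity of the weight on [0,∞)
  have hwcont : ContinuousOn w (Set.Ici (0:ℝ)) := by
    apply ContinuousOn.rpow_const
    · exact (continuous_const.add (continuous_const.mul continuous_id)).continuousOn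
    · intro x hx
      exact Or.inl (ne_of_gt (hbase x (mem_Ici.1 hx)))
  have hwnonneg : ∀ t : ℝ, 0 ≤ t → 0 ≤ w t := fun t ht =>
    Real.rpow_nonneg (hbase t ht).le _
  have hsub : ∀ a b : ℝ, 0 ≤ a → a ≤ b → Set.uIcc a b ⊆ Set.Ici (0:ℝ) := by
    intro a b ha hab
    rw [Set.uIcc_of_le hab]
    exact subset_trans Set.Icc_subset_Ici_self (Set.Ici_subset_Ici.2 ha)
  have hIntw : ∀ a b : ℝ, 0 ≤ a → a ≤ b → IntervalIntegrable w MeasureTheory.volume a b := by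
    intro a b ha hab
    exact (hwcont.mono (hsub a b ha hab)).intervalIntegrable
  have hIntA : ∀ a b : ℝ, 0 ≤ a → a ≤ b →
      IntervalIntegrable (fun t => θ t * w t) MeasureTheory.volume a b := by
    intro a b ha hab
    exact ((hθanti.mono (hsub a b ha hab)).intervalIntegrable).mul_continuousOn
      (hwcont.mono (hsub a b ha hab))
  -- exact value of the weight integral
  have hWval : ∀ R : ℝ, 0 ≤ R →
      (∫ t in (0:ℝ)..R, w t) = ((1 + c * R) ^ k - 1) / (c * k) := by
    intro R hR
    have hderiv : ∀ t ∈ Set.uIcc (0:ℝ) R,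
        HasDerivAt (fun t => (1 + c * t) ^ k / (c * k)) (w t) t := by
      intro t _
      have h1 : HasDerivAt (fun t : ℝ => 1 + c * t) c t := by
        simpa using ((hasDerivAt_id t).const_mul c).const_add (1:ℝ)
      have h2 := (h1.rpow_const (p := k) (Or.inr hk.le)).div_const (c * k)
      have e : w t = c * k * (1 + c * t) ^ (k - 1) / (c * k) := by
        rw [eq_div_iff (by positivity)]; simp only [hwdef]; ring
      rw [e]; exact h2
    have := intervalIntegral.integral_eq_sub_of_hasDerivAt hderiv (hIntw 0 R le_rfl hR)
    rw [this]
    rw [mul_zero, add_zero, Real.one_rpow]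
    ring
  -- main rigidity claim
  have main : ∀ t : ℝ, 0 ≤ t → θ t = θ 0 := by
    intro t₀ ht₀
    by_contra hne
    have hlt : θ t₀ < θ 0 :=
      lt_of_le_of_ne (hθanti (mem_Ici.2 le_rfl) (mem_Ici.2 ht₀) ht₀) hne
    set W₀ : ℝ := ∫ t in (0:ℝ)..t₀, w t with hW₀
    have hW₀nonneg : 0 ≤ W₀ := by
      apply intervalIntegral.integral_nonneg ht₀
      intro u hu; exact hwnonneg u hu.1
    set g : ℝ → ℝ := fun R => k * (θ 0 * W₀) / R ^ k + θ t₀ * (1 / R + c) ^ k / c with hg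
    set Φ : ℝ → ℝ := fun R => (k / R ^ k) * ∫ t in (0:ℝ)..R, θ t * (1 + c * t) ^ (k - 1)
      with hΦ
    -- eventual bound Φ ≤ g
    have hev : ∀ᶠ R in atTop, Φ R ≤ g R := by
      filter_upwards [eventually_ge_atTop (max t₀ 1)] with R hR
      have hRt₀ : t₀ ≤ R := le_trans (le_max_left _ _) hR
      have hR1 : (1:ℝ) ≤ R := le_trans (le_max_right _ _) hR
      have hRpos : (0:ℝ) < R := lt_of_lt_of_le one_pos hR1
      have hRkpos : (0:ℝ) < R ^ k := Real.rpow_pos_of_pos hRpos k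
      -- split the integral
      have hsplit : (∫ t in (0:ℝ)..R, θ t * w t) =
          (∫ t in (0:ℝ)..t₀, θ t * w t) + ∫ t in t₀..R, θ t * w t :=
        (intervalIntegral.integral_add_adjacent_intervals
          (hIntA 0 t₀ le_rfl ht₀) (hIntA t₀ R ht₀ hRt₀)).symm
      have h1 : (∫ t in (0:ℝ)..t₀, θ t * w t) ≤ θ 0 * W₀ := by
        have := intervalIntegral.integral_mono_on ht₀ (hIntA 0 t₀ le_rfl ht₀)
          ((hIntw 0 t₀ le_rfl ht₀).const_mul (θ 0))
          (fun x hx => mul_le_mul_of_nonneg_right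
            (hθanti (mem_Ici.2 le_rfl) (mem_Ici.2 hx.1) hx.1) (hwnonneg x hx.1))
        simpa [hW₀, intervalIntegral.integral_const_mul] using this
      have h2 : (∫ t in t₀..R, θ t * w t) ≤ θ t₀ * ∫ t in t₀..R, w t := by
        have := intervalIntegral.integral_mono_on hRt₀ (hIntA t₀ R ht₀ hRt₀)
          ((hIntw t₀ R ht₀ hRt₀).const_mul (θ t₀))
          (fun x hx => mul_le_mul_of_nonneg_right
            (hθanti (mem_Ici.2 ht₀) (mem_Ici.2 (le_trans ht₀ hx.1)) hx.1)
            (hwnonneg x (le_trans ht₀ hx.1)))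
        simpa [intervalIntegral.integral_const_mul] using this
      have hWsplit : (∫ t in t₀..R, w t) = (∫ t in (0:ℝ)..R, w t) - W₀ := by
        have := intervalIntegral.integral_add_adjacent_intervals
          (hIntw 0 t₀ le_rfl ht₀) (hIntw t₀ R ht₀ hRt₀)
        rw [← this, hW₀]; ring
      have h3 : (∫ t in (0:ℝ)..R, θ t * w t) ≤ θ 0 * W₀ + θ t₀ * ∫ t in (0:ℝ)..R, w t := by
        have hθt₀pos := hθpos t₀ ht₀
        have : θ t₀ * (∫ t in t₀..R, w t) ≤ θ t₀ * ∫ t in (0:ℝ)..R, w t := by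
          rw [hWsplit]
          have : (∫ t in (0:ℝ)..R, w t) - W₀ ≤ ∫ t in (0:ℝ)..R, w t := by linarith
          exact mul_le_mul_of_nonneg_left this hθt₀pos.le
        rw [hsplit]; linarith
      -- now bound Φ R
      have hΦle : Φ R ≤ (k / R ^ k) * (θ 0 * W₀ + θ t₀ * ∫ t in (0:ℝ)..R, w t) := by
        apply mul_le_mul_of_nonneg_left _ (le_of_lt (div_pos hkpos hRkpos))
        simpa [hwdef] using h3
      refine le_trans hΦle ?_
      rw [hWval R hRpos.le]
      -- algebraic comparison with g R
      have hXnn : (0:ℝ) ≤ 1 + c * R := (hbase R hRpos.le).le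
      have hdiv : ((1 + c * R) / R) ^ k = (1 + c * R) ^ k / R ^ k :=
        Real.div_rpow hXnn hRpos.le k
      have hfrac : (1 + c * R) / R = 1 / R + c := by
        field_simp
      have key : (k / R ^ k) * (θ t₀ * (((1 + c * R) ^ k - 1) / (c * k)))
          ≤ θ t₀ * (1 / R + c) ^ k / c := by
        rw [← hfrac, hdiv]
        have hθt₀pos := hθpos t₀ ht₀
        have hne1 : R ^ k ≠ 0 := ne_of_gt hRkpos
        have hcne : c ≠ 0 := ne_of_gt hcpos
        have hkne : k ≠ 0 := ne_of_gt hkpos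
        have heq : θ t₀ * ((1 + c * R) ^ k / R ^ k) / c
            - (k / R ^ k) * (θ t₀ * (((1 + c * R) ^ k - 1) / (c * k)))
            = θ t₀ / (c * R ^ k) := by
          field_simp
          ring
        have hpos : 0 ≤ θ t₀ / (c * R ^ k) := by positivity
        linarith
      have : (k / R ^ k) * (θ 0 * W₀) = k * (θ 0 * W₀) / R ^ k := by ring
      rw [hg, mul_add, this]
      exact add_le_add le_rfl (by simpa [mul_assoc] using key)
    -- g tends to θ t₀ * c ^ (k - 1)
    have hgtend : Tendsto g atTop (nhds (θ t₀ * c ^ (k - 1))) := by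
      have h1 : Tendsto (fun R : ℝ => k * (θ 0 * W₀) / R ^ k) atTop (nhds 0) :=
        tendsto_const_nhds.div_atTop (tendsto_rpow_atTop hkpos)
      have h2 : Tendsto (fun R : ℝ => 1 / R + c) atTop (nhds c) := by
        have := (tendsto_inv_atTop_zero (𝕜 := ℝ)).add_const c
        simpa [one_div] using this
      have h3 : Tendsto (fun R : ℝ => θ t₀ * (1 / R + c) ^ k / c) atTop
          (nhds (θ t₀ * c ^ k / c)) :=
        ((h2.rpow_const (Or.inl (ne_of_gt hcpos))).const_mul _).div_const c
      have h4 := h1.add h3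
      have : θ t₀ * c ^ k / c = θ t₀ * c ^ (k - 1) := by
        rw [Real.rpow_sub_one (ne_of_gt hcpos)]
        ring
      rw [← this]
      simpa [hg, one_div] using h4
    -- Φ is eventually nonnegative
    have hΦnonneg : ∀ᶠ R in atTop, (0:ℝ) ≤ Φ R := by
      filter_upwards [eventually_ge_atTop (0:ℝ)] with R hR
      have hRk : (0:ℝ) ≤ R ^ k := Real.rpow_nonneg hR k
      apply mul_nonneg (div_nonneg hkpos.le hRk)
      apply intervalIntegral.integral_nonneg hR
      intro u hu
      exact mul_nonneg (hθpos u hu.1).le (hwnonneg u hu.1)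
    have hbddΦ : IsBoundedUnder (· ≥ ·) atTop Φ := ⟨0, hΦnonneg⟩
    have hcobg : IsCoboundedUnder (· ≥ ·) atTop g :=
      hgtend.isBoundedUnder_le.isCoboundedUnder_ge
    have hle : liminf Φ atTop ≤ liminf g atTop :=
      liminf_le_liminf hev hbddΦ hcobg
    rw [hgtend.liminf_eq] at hle
    have hcontr : θ 0 * c ^ (k - 1) ≤ θ t₀ * c ^ (k - 1) := le_trans hliminf hle
    have : θ t₀ * c ^ (k - 1) < θ 0 * c ^ (k - 1) :=
      mul_lt_mul_of_pos_right hlt (Real.rpow_pos_of_pos hcpos _)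
    linarith
  exact ⟨main, fun t ht => by rw [main t ht]⟩
end
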